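/- Fix b > −d with b ≠ 0 and a_0 > max{b,0}. There exists r_* ≥ 2 depending only on b and a_0 such that for all a ≥ a_0 and all r ≥ r_*, the inequality min_{t ≥ r} (t^a/a − t^b/b) ≥ r^a/(2a) holds. -/

import Mathlib

/-- For fixed `b > -d` with `b ≠ 0` and `a₀ > max{b,0}`, there exists `r_* ≥ 2`
(depending only on `b` and `a₀`) such that for all `a ≥ a₀` and all `r ≥ r_*`,
`t^a/a - t^b/b ≥ r^a/(2a)` for every `t ≥ r`. -/
theorem power_law_lower_bound (d : ℕ) (hd : 0 < d) (b : ℝ) (hb : -(d:ℝ) < b) (hb0 : b ≠ 0)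
    (a₀ : ℝ) (ha₀ : max b 0 < a₀) :
    ∃ rstar : ℝ, 2 ≤ rstar ∧
      ∀ a : ℝ, a₀ ≤ a → ∀ r : ℝ, rstar ≤ r → ∀ t : ℝ, r ≤ t →
        r ^ a / (2 * a) ≤ t ^ a / a - t ^ b / b := by
  have ha₀0 : 0 < a₀ := lt_of_le_of_lt (le_max_right b 0) ha₀
  have hba₀ : b < a₀ := lt_of_le_of_lt (le_max_left b 0) ha₀
  rcases hb0.lt_or_gt with hbneg | hbpos
  · refine ⟨2, le_refl 2, ?_⟩
    intro a ha r hr t ht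
    have ha0 : 0 < a := lt_of_lt_of_le ha₀0 ha
    have hr0 : (0:ℝ) < r := lt_of_lt_of_le two_pos hr
    have ht0 : (0:ℝ) < t := lt_of_lt_of_le hr0 ht
    have htb : 0 < t ^ b := Real.rpow_pos_of_pos ht0 b
    have hta : r ^ a ≤ t ^ a := Real.rpow_le_rpow hr0.le ht ha0.le
    have hra : 0 < r ^ a := Real.rpow_pos_of_pos hr0 a
    have h1 : t ^ b / b < 0 := div_neg_of_pos_of_neg htb hbneg
    have h2 : r ^ a / (2 * a) ≤ t ^ a / a := by
      rw [div_le_div_iff₀ (by positivity) ha0]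
      nlinarith
    linarith
  · set c : ℝ := (a₀ - b) / a₀ with hc
    have hcpos : 0 < c := div_pos (by linarith) ha₀0
    refine ⟨max 2 (Real.exp (2 / (c * b))), le_max_left _ _, ?_⟩
    intro a ha r hr t ht
    have ha0 : 0 < a := lt_of_lt_of_le ha₀0 ha
    have hr2 : 2 ≤ r := le_trans (le_max_left _ _) hr
    have hre : Real.exp (2 / (c * b)) ≤ r := le_trans (le_max_right _ _) hr
    have hr0 : (0:ℝ) < r := by linarith
    have ht0 : (0:ℝ) < t := by linarith
    have hlogr : 2 / (c * b) ≤ Real.log r := (Real.le_log_iff_exp_le hr0).mpr hre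
    have hcb : 0 < c * b := mul_pos hcpos hbpos
    have hca : c * a ≤ a - b := by
      rw [hc, div_mul_eq_mul_div, div_le_iff₀ ha₀0]
      nlinarith
    have h2ab : Real.log (2 * a / b) ≤ c * a * Real.log r := by
      have h1 : Real.log (2 * a / b) ≤ 2 * a / b - 1 :=
        Real.log_le_sub_one_of_pos (by positivity)
      have h2 : 2 * a / b ≤ c * a * Real.log r := by
        have h3 : 2 / (c * b) * (c * a) ≤ Real.log r * (c * a) :=
          mul_le_mul_of_nonneg_right hlogr (by positivity)
        calc 2 * a / b = 2 / (c * b) * (c * a) := by field_simp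
        _ ≤ Real.log r * (c * a) := h3
        _ = c * a * Real.log r := by ring
      linarith
    have hkey : 2 * a / b ≤ t ^ (a - b) := by
      have he : 2 * a / b = Real.exp (Real.log (2 * a / b)) :=
        (Real.exp_log (by positivity)).symm
      rw [he]
      calc Real.exp (Real.log (2 * a / b)) ≤ Real.exp (c * a * Real.log r) :=
            Real.exp_le_exp.mpr h2ab
      _ = r ^ (c * a) := by rw [Real.rpow_def_of_pos hr0, mul_comm]
      _ ≤ r ^ (a - b) := Real.rpow_le_rpow_of_exponent_le (by linarith) hca
      _ ≤ t ^ (a - b) := Real.rpow_le_rpow hr0.le ht (by linarith)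
    have htab : t ^ (a - b) * t ^ b = t ^ a := by
      rw [← Real.rpow_add ht0]; ring_nf
    have htb : 0 < t ^ b := Real.rpow_pos_of_pos ht0 b
    have hhalf : t ^ b / b ≤ t ^ a / (2 * a) := by
      rw [div_le_div_iff₀ hbpos (by positivity)]
      calc t ^ b * (2 * a) = (2 * a / b) * t ^ b * b := by field_simp
      _ ≤ t ^ (a - b) * t ^ b * b := by gcongr
      _ = t ^ a * b := by rw [htab]
    have hta : r ^ a ≤ t ^ a := Real.rpow_le_rpow hr0.le ht ha0.le
    have hsplit : t ^ a / a - t ^ a / (2 * a) = t ^ a / (2 * a) := by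
      field_simp; ring
    have hfin : r ^ a / (2 * a) ≤ t ^ a / (2 * a) :=
      by gcongr
    linarith
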